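/- arXiv:2202.09068 — 5 statements merged into one kernel-verified Lean document; each statement's English description precedes it below -/
import Mathlib

section
/- Let G be a daisy cube of dimension n, i.e., the subgraph of the hypercube Q_n induced by a nonempty downward-closed vertex set V ⊆ {0,1}^n. Then twice the Wiener index of G minus the Mostar index of G equals |V(G)|·|E(G)|, that is, 2·W(G) − Mo(G) = |V(G)|·|E(G)|. -/
/-- Vertices of the hypercube `Q_n`: binary strings of length `n`. -/
abbrev Vtx (n : ℕ) := Fin n → Bool

/-- The subgraph of the hypercube `Q_n` induced by a set `V` of vertices:
two vertices are adjacent iff they differ in precisely one coordinate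
(i.e. their Hamming distance is `1`). -/
def cubeGraph {n : ℕ} (V : Finset (Vtx n)) : SimpleGraph {u : Vtx n // u ∈ V} where
  Adj u v := hammingDist u.1 v.1 = 1
  symm := ⟨fun u v h => (hammingDist_comm v.1 u.1).trans h⟩
  loopless := ⟨fun u h => by simp [hammingDist_self] at h⟩

instance {n : ℕ} {V : Finset (Vtx n)} : DecidableRel (cubeGraph V).Adj :=
  fun u v => inferInstanceAs (Decidable (hammingDist u.1 v.1 = 1))

/-- A set of vertices of `Q_n` is downward closed if `u ≤ v` componentwise
and `v ∈ V` imply `u ∈ V`. -/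
def DownClosed {n : ℕ} (V : Finset (Vtx n)) : Prop :=
  ∀ u v : Vtx n, (∀ i, u i ≤ v i) → v ∈ V → u ∈ V

/-- The Wiener index: the sum of graph distances over all unordered pairs of vertices. -/
noncomputable def wiener {α : Type*} [Fintype α] [DecidableEq α] (G : SimpleGraph α) : ℕ :=
  ∑ p : Sym2 α, Sym2.lift ⟨fun u v => G.dist u v, fun _ _ => SimpleGraph.dist_comm⟩ p

/-- `closerCount G u v` is the number of vertices of `G` strictly closer
(in graph distance) to `u` than to `v`. -/
noncomputable def closerCount {α : Type*} (G : SimpleGraph α) (u v : α) : ℕ :=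
  Nat.card {w : α // G.dist w u < G.dist w v}

/-- The Mostar index: `∑_{uv ∈ E(G)} |n_{u,v} - n_{v,u}|`. -/
noncomputable def mostar {α : Type*} [Fintype α] [DecidableEq α] (G : SimpleGraph α)
    [DecidableRel G.Adj] : ℕ :=
  ∑ e ∈ G.edgeFinset,
    Sym2.lift ⟨fun u v => ((closerCount G u v : ℤ) - (closerCount G v u : ℤ)).natAbs,
      fun a b => by
        show (_ - _ : ℤ).natAbs = (_ - _ : ℤ).natAbs
        rw [← Int.natAbs_neg, neg_sub]⟩ e

namespace DaisyAux

variable {n : ℕ}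

lemma hamming_filter (x y : Vtx n) :
    hammingDist x y = (Finset.univ.filter fun i => x i ≠ y i).card := rfl

/-- If `x` and `y` differ exactly at `i` and `w` agrees with `x` at `i`,
then `d(w,y) = d(w,x) + 1`. -/
lemma hamming_succ {x y w : Vtx n} {i : Fin n}
    (hne : x i ≠ y i) (heq : ∀ j, j ≠ i → x j = y j) (hw : w i = x i) :
    hammingDist w y = hammingDist w x + 1 := by
  have h1 : (Finset.univ.filter fun j => w j ≠ y j)
      = insert i (Finset.univ.filter fun j => w j ≠ x j) := by
    ext j
    by_cases hj : j = i
    · subst hj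
      constructor
      · intro _; exact Finset.mem_insert_self _ _
      · intro _
        simp only [Finset.mem_filter, Finset.mem_univ, true_and]
        rw [hw]; exact hne
    · simp [Finset.mem_insert, hj, heq j hj]
  have h2 : i ∉ (Finset.univ.filter fun j => w j ≠ x j) := by simp [hw]
  rw [hamming_filter, hamming_filter, h1, Finset.card_insert_of_notMem h2]

lemma bool_third {a b c : Bool} (h : a ≠ b) (h2 : c ≠ a) : c = b := by
  revert h h2; revert a b c; decide

lemma hamming_lt_iff {x y w : Vtx n} {i : Fin n}
    (hne : x i ≠ y i) (heq : ∀ j, j ≠ i → x j = y j) :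
    hammingDist w x < hammingDist w y ↔ w i = x i := by
  by_cases hw : w i = x i
  · simp [hamming_succ hne heq hw, hw]
  · have hw' : w i = y i := bool_third hne hw
    have := hamming_succ (Ne.symm hne) (fun j hj => (heq j hj).symm) hw'
    simp [this, hw]

lemma update_mem {V : Finset (Vtx n)} (hdc : DownClosed V) {v : Vtx n} (hv : v ∈ V)
    (i : Fin n) : Function.update v i false ∈ V := by
  refine hdc _ v (fun j => ?_) hv
  by_cases hj : j = i
  · subst hj; simp
  · simp [Function.update_of_ne hj]

lemma update_ne {v : Vtx n} {i : Fin n} (hv : v i = true) :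
    Function.update v i false i ≠ v i := by simp [hv]

lemma update_eq {v : Vtx n} {i : Fin n} :
    ∀ j, j ≠ i → Function.update v i false j = v j := fun j hj =>
  Function.update_of_ne hj _ _

lemma hamming_update_self {v : Vtx n} {i : Fin n} (hv : v i = true) :
    hammingDist (Function.update v i false) v = 1 := by
  have := hamming_succ (w := Function.update v i false) (update_ne hv) update_eq rfl
  simpa [hammingDist_self] using this

variable {V : Finset (Vtx n)}

lemma exists_walk (hdc : DownClosed V) :
    ∀ (d : ℕ) (u v : {u : Vtx n // u ∈ V}), hammingDist u.1 v.1 = d →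
      ∃ p : (cubeGraph V).Walk u v, p.length = d := by
  intro d
  induction d with
  | zero =>
    intro u v h
    obtain rfl : u = v := Subtype.ext (eq_of_hammingDist_eq_zero h)
    exact ⟨.nil, rfl⟩
  | succ d ih =>
    intro u v h
    obtain ⟨i, hi⟩ : ∃ i, u.1 i ≠ v.1 i := by
      by_contra hc
      push_neg at hc
      rw [show u.1 = v.1 from funext hc, hammingDist_self] at h
      omega
    by_cases hu : u.1 i = true
    · -- flip u at i
      set u' : Vtx n := Function.update u.1 i false with hu'
      have hmem : u' ∈ V := update_mem hdc u.2 i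
      have hadj : (cubeGraph V).Adj u ⟨u', hmem⟩ := by
        show hammingDist u.1 u' = 1
        rw [hammingDist_comm]; exact hamming_update_self hu
      have hvf : v.1 i = false := bool_third (show u.1 i ≠ false by simp [hu]) (Ne.symm hi)
      have hvi : v.1 i = u' i := by simp [hu', hvf]
      have hd' : hammingDist u' v.1 = d := by
        have h2 := hamming_succ (w := v.1) (x := u') (y := u.1)
          (update_ne hu) update_eq hvi
        rw [hammingDist_comm u.1 v.1] at h
        rw [hammingDist_comm]
        omega
      obtain ⟨p, hp⟩ := ih ⟨u', hmem⟩ v hd'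
      exact ⟨SimpleGraph.Walk.cons hadj p, by simp [hp]⟩
    · -- u.1 i = false, so v.1 i = true; flip v at i
      have hvt : v.1 i = true := bool_third hu (Ne.symm hi)
      set v' : Vtx n := Function.update v.1 i false with hv'
      have hmem : v' ∈ V := update_mem hdc v.2 i
      have hadj : (cubeGraph V).Adj (⟨v', hmem⟩ : {u : Vtx n // u ∈ V}) v :=
        hamming_update_self hvt
      have hui : u.1 i = v' i := by
        have huf : u.1 i = false := by simpa using hu
        simp [hv', huf]
      have hd' : hammingDist u.1 v' = d := by
        have h2 := hamming_succ (w := u.1) (x := v') (y := v.1)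
          (update_ne hvt) update_eq hui
        omega
      obtain ⟨p, hp⟩ := ih u ⟨v', hmem⟩ hd'
      exact ⟨p.concat hadj, by simp [SimpleGraph.Walk.length_concat, hp]⟩

lemma hamming_le_walk : ∀ {u v : {u : Vtx n // u ∈ V}} (p : (cubeGraph V).Walk u v),
    hammingDist u.1 v.1 ≤ p.length := by
  intro u v p
  induction p with
  | nil => simp [hammingDist_self]
  | @cons a b c h q ih =>
    have htri := hammingDist_triangle a.1 b.1 c.1
    have hab : hammingDist a.1 b.1 = 1 := h
    simp only [SimpleGraph.Walk.length_cons]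
    omega

lemma dist_eq (hdc : DownClosed V) (u v : {u : Vtx n // u ∈ V}) :
    (cubeGraph V).dist u v = hammingDist u.1 v.1 := by
  obtain ⟨p, hp⟩ := exists_walk hdc _ u v rfl
  refine le_antisymm (hp ▸ SimpleGraph.dist_le p) ?_
  obtain ⟨q, hq⟩ := p.reachable.exists_walk_length_eq_dist
  rw [← hq]
  exact hamming_le_walk q


/-- Count of vertices in the graph (as subtype) satisfying a coordinate predicate. -/
lemma nat_card_subtype_finset {p : Vtx n → Prop} [DecidablePred p] :
    Nat.card {w : {u : Vtx n // u ∈ V} // p w.1} = (V.filter p).card := by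
  have e : {w : {u : Vtx n // u ∈ V} // p w.1} ≃ {w : Vtx n // w ∈ V.filter p} :=
    { toFun := fun w => ⟨w.1.1, Finset.mem_filter.2 ⟨w.1.2, w.2⟩⟩
      invFun := fun w => ⟨⟨w.1, (Finset.mem_filter.1 w.2).1⟩, (Finset.mem_filter.1 w.2).2⟩
      left_inv := fun _ => rfl
      right_inv := fun _ => rfl }
  rw [Nat.card_congr e, Nat.card_eq_finsetCard]

lemma closer_eq (hdc : DownClosed V) {a b : {u : Vtx n // u ∈ V}} {i : Fin n}
    (hne : a.1 i ≠ b.1 i) (heq : ∀ j, j ≠ i → a.1 j = b.1 j) :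
    closerCount (cubeGraph V) a b = (V.filter fun w => w i = a.1 i).card := by
  unfold closerCount
  have hiff : ∀ w : {u : Vtx n // u ∈ V},
      ((cubeGraph V).dist w a < (cubeGraph V).dist w b) ↔ w.1 i = a.1 i := fun w => by
    rw [dist_eq hdc, dist_eq hdc]; exact hamming_lt_iff hne heq
  rw [Nat.card_congr (Equiv.subtypeEquivRight hiff)]
  exact nat_card_subtype_finset (p := fun w => w i = a.1 i)

lemma two_wiener {α : Type*} [Fintype α] [DecidableEq α] (G : SimpleGraph α) :
    2 * wiener G = ∑ x : α × α, G.dist x.1 x.2 := by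
  classical
  have key : ∀ p : Sym2 α,
      (2 : ℕ) * Sym2.lift ⟨fun u v => G.dist u v, fun _ _ => SimpleGraph.dist_comm⟩ p
        = ∑ x ∈ Finset.univ.filter (fun x : α × α => Sym2.mk.uncurry x = p), G.dist x.1 x.2 := by
    intro p
    refine Sym2.inductionOn p (fun a b => ?_)
    rcases eq_or_ne a b with rfl | hab
    · have hf : Finset.univ.filter (fun x : α × α => Sym2.mk.uncurry x = s(a, a)) = {(a, a)} := by
        ext ⟨x1, x2⟩
        simp only [Finset.mem_filter, Finset.mem_univ, true_and, Finset.mem_singleton,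
          Prod.mk.injEq]
        rw [show Sym2.mk.uncurry (x1, x2) = s(x1, x2) from rfl, Sym2.eq_iff]
        tauto
      rw [hf]
      simp [SimpleGraph.dist_self]
    · have hf : Finset.univ.filter (fun x : α × α => Sym2.mk.uncurry x = s(a, b))
          = {(a, b), (b, a)} := by
        ext ⟨x1, x2⟩
        simp only [Finset.mem_filter, Finset.mem_univ, true_and, Finset.mem_insert,
          Finset.mem_singleton, Prod.mk.injEq]
        rw [show Sym2.mk.uncurry (x1, x2) = s(x1, x2) from rfl, Sym2.eq_iff]
      rw [hf, Finset.sum_pair (by simp only [Ne, Prod.mk.injEq, not_and]; exact fun h _ => hab h)]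
      rw [Sym2.lift_mk]
      simp only
      rw [SimpleGraph.dist_comm (u := b)]
      ring
  rw [wiener, Finset.mul_sum]
  rw [← Finset.sum_fiberwise Finset.univ Sym2.mk.uncurry (fun x : α × α => G.dist x.1 x.2)]
  exact Finset.sum_congr rfl fun p _ => key p

/-- The set parametrizing the edges: pairs `(i, v)` with `v ∈ V` and `v i = true`. -/
def Tset (V : Finset (Vtx n)) : Finset (Fin n × Vtx n) :=
  (Finset.univ ×ˢ V).filter fun p => p.2 p.1 = true

/-- The edge associated to a pair `(i, v)`. -/
noncomputable def phi (hdc : DownClosed V) (x₀ : {u : Vtx n // u ∈ V})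
    (p : Fin n × Vtx n) : Sym2 {u : Vtx n // u ∈ V} :=
  if h : p.2 ∈ V then
    s((⟨Function.update p.2 p.1 false, update_mem hdc h p.1⟩ : {u : Vtx n // u ∈ V}), ⟨p.2, h⟩)
  else s(x₀, x₀)

lemma adj_exists_coord {a b : {u : Vtx n // u ∈ V}} (h : (cubeGraph V).Adj a b) :
    ∃ i, a.1 i ≠ b.1 i ∧ ∀ j, j ≠ i → a.1 j = b.1 j := by
  have h' : (Finset.univ.filter fun j => a.1 j ≠ b.1 j).card = 1 := h
  obtain ⟨i, hi⟩ := Finset.card_eq_one.1 h'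
  refine ⟨i, ?_, ?_⟩
  · have : i ∈ Finset.univ.filter fun j => a.1 j ≠ b.1 j := hi ▸ Finset.mem_singleton_self i
    simpa using this
  · intro j hj
    by_contra hc
    have : j ∈ Finset.univ.filter fun j => a.1 j ≠ b.1 j := by simpa using hc
    rw [hi, Finset.mem_singleton] at this
    exact hj this

lemma mem_Tset {p : Fin n × Vtx n} : p ∈ Tset V ↔ p.2 ∈ V ∧ p.2 p.1 = true := by
  simp [Tset]

lemma phi_adj (hdc : DownClosed V) (x₀ : {u : Vtx n // u ∈ V}) {p : Fin n × Vtx n}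
    (hp : p ∈ Tset V) : phi hdc x₀ p ∈ (cubeGraph V).edgeFinset := by
  obtain ⟨hv, hvi⟩ := mem_Tset.1 hp
  rw [phi, dif_pos hv]
  rw [SimpleGraph.mem_edgeFinset, SimpleGraph.mem_edgeSet]
  show hammingDist _ _ = 1
  exact hamming_update_self hvi

lemma edge_image (hdc : DownClosed V) (x₀ : {u : Vtx n // u ∈ V}) :
    (cubeGraph V).edgeFinset = (Tset V).image (phi hdc x₀) := by
  refine Finset.Subset.antisymm ?_ ?_
  · intro e he
    induction e using Sym2.inductionOn with
    | hf a b =>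
      rw [SimpleGraph.mem_edgeFinset, SimpleGraph.mem_edgeSet] at he
      obtain ⟨i, hab, heq⟩ := adj_exists_coord he
      rw [Finset.mem_image]
      by_cases hb : b.1 i = true
      · refine ⟨(i, b.1), mem_Tset.2 ⟨b.2, hb⟩, ?_⟩
        rw [phi, dif_pos b.2]
        have ha1 : a.1 = Function.update b.1 i false := by
          funext j
          by_cases hj : j = i
          · subst hj
            rw [Function.update_self]
            exact bool_third (show b.1 j ≠ false by simp [hb]) hab
          · rw [Function.update_of_ne hj]
            exact heq j hj
        exact congr_arg₂ (fun x y => s(x, y)) (Subtype.ext ha1.symm) (Subtype.ext rfl)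
      · have ha : a.1 i = true := bool_third hb hab
        refine ⟨(i, a.1), mem_Tset.2 ⟨a.2, ha⟩, ?_⟩
        rw [phi, dif_pos a.2]
        have hb1 : b.1 = Function.update a.1 i false := by
          funext j
          by_cases hj : j = i
          · subst hj
            rw [Function.update_self]
            exact bool_third (show a.1 j ≠ false by simp [ha]) (Ne.symm hab)
          · rw [Function.update_of_ne hj]
            exact (heq j hj).symm
        rw [Sym2.eq_swap]
        exact congr_arg₂ (fun x y => s(x, y)) (Subtype.ext rfl) (Subtype.ext hb1.symm)
  · intro e he
    obtain ⟨p, hp, rfl⟩ := Finset.mem_image.1 he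
    exact phi_adj hdc x₀ hp

lemma phi_inj (hdc : DownClosed V) (x₀ : {u : Vtx n // u ∈ V}) :
    ∀ p ∈ Tset V, ∀ q ∈ Tset V, phi hdc x₀ p = phi hdc x₀ q → p = q := by
  rintro ⟨i, v⟩ hp ⟨i', v'⟩ hq h
  obtain ⟨hv, hvi⟩ := mem_Tset.1 hp
  obtain ⟨hv', hvi'⟩ := mem_Tset.1 hq
  have hvi : v i = true := hvi
  have hvi' : v' i' = true := hvi'
  rw [phi, phi, dif_pos hv, dif_pos hv', Sym2.eq_iff] at h
  rcases h with ⟨h1, h2⟩ | ⟨h1, h2⟩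
  · have hvv : v = v' := congrArg Subtype.val h2
    subst hvv
    have hupd : Function.update v i false = Function.update v i' false :=
      congrArg Subtype.val h1
    have hii : i = i' := by
      by_contra hii
      have := congrFun hupd i
      rw [Function.update_self, Function.update_of_ne hii] at this
      rw [← this] at hvi
      simp at hvi
    rw [hii]
  · exfalso
    have h1' : Function.update v i false = v' := congrArg Subtype.val h1
    have h2' : v = Function.update v' i' false := congrArg Subtype.val h2
    by_cases hii : i = i'
    · subst hii
      have := congrFun h1' i
      rw [Function.update_self] at this
      rw [← this] at hvi'
      simp at hvi'
    · have e1 : v' i' = v i' := by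
        rw [← h1', Function.update_of_ne (show i' ≠ i from fun h => hii h.symm)]
      have e2 : v i' = false := by rw [h2', Function.update_self]
      rw [e1, e2] at hvi'
      simp at hvi'

lemma t_le_f (hdc : DownClosed V) (i : Fin n) :
    (V.filter fun v => v i = true).card ≤ (V.filter fun v => v i = false).card := by
  refine Finset.card_le_card_of_injOn (fun v => Function.update v i false) ?_ ?_
  · intro v hv
    rw [Finset.coe_filter, Set.mem_setOf_eq] at hv ⊢
    exact ⟨update_mem hdc hv.1 i, Function.update_self i false v⟩
  · intro a ha b hb hab
    rw [Finset.coe_filter, Set.mem_setOf_eq] at ha hb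
    funext j
    by_cases hj : j = i
    · subst hj; rw [ha.2, hb.2]
    · have h2 : Function.update a i false j = Function.update b i false j := congrFun hab j
      rwa [Function.update_of_ne hj, Function.update_of_ne hj] at h2

lemma sum_Tset {M : Type*} [AddCommMonoid M] (g : Fin n → M) :
    ∑ p ∈ Tset V, g p.1 = ∑ i : Fin n, (V.filter fun v => v i = true).card • g i := by
  rw [Tset, Finset.sum_filter, Finset.sum_product]
  refine Finset.sum_congr rfl fun i _ => ?_
  rw [← Finset.sum_filter]
  show ∑ _v ∈ V.filter (fun v => v i = true), g i = _
  rw [Finset.sum_const]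

end DaisyAux

/-- For a daisy cube `G` (the subgraph of `Q_n` induced by a nonempty
downward-closed vertex set `V`), `2·W(G) - Mo(G) = |V(G)|·|E(G)|`. -/
theorem daisy_two_wiener_sub_mostar {n : ℕ} (V : Finset (Vtx n))
    (hne : V.Nonempty) (hdc : DownClosed V) :
    2 * (wiener (cubeGraph V) : ℤ) - (mostar (cubeGraph V) : ℤ) =
      (V.card : ℤ) * ((cubeGraph V).edgeFinset.card : ℤ) := by
  classical
  open DaisyAux in
  obtain ⟨v₀, hv₀⟩ := hne
  set x₀ : {u : Vtx n // u ∈ V} := ⟨v₀, hv₀⟩ with hx₀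
  set tc : Fin n → ℕ := fun i => (V.filter fun v => v i = true).card with htc
  set fc : Fin n → ℕ := fun i => (V.filter fun v => v i = false).card with hfc
  have hfilt : ∀ i, V.filter (fun v => ¬ v i = true) = V.filter (fun v => v i = false) := by
    intro i
    apply Finset.filter_congr
    intro v _
    cases v i <;> simp
  have HN : ∀ i, tc i + fc i = V.card := by
    intro i
    rw [htc, hfc]
    simp only
    rw [← hfilt i]
    exact Finset.card_filter_add_card_filter_not _
  have HT : ∀ i, tc i ≤ fc i := fun i => DaisyAux.t_le_f hdc i
  -- Wiener index computation
  have HW : 2 * wiener (cubeGraph V) = ∑ i : Fin n, (tc i * fc i + fc i * tc i) := by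
    rw [DaisyAux.two_wiener]
    have h1 : ∀ x : {u : Vtx n // u ∈ V} × {u : Vtx n // u ∈ V},
        (cubeGraph V).dist x.1 x.2 = ∑ i : Fin n, if x.1.1 i ≠ x.2.1 i then 1 else 0 := by
      intro x
      rw [DaisyAux.dist_eq hdc, DaisyAux.hamming_filter, Finset.card_filter]
    rw [Finset.sum_congr rfl fun x _ => h1 x, Finset.sum_comm]
    refine Finset.sum_congr rfl fun i _ => ?_
    rw [Fintype.sum_prod_type]
    have e1 : ∀ u : {u : Vtx n // u ∈ V},
        (∑ v : {u : Vtx n // u ∈ V}, if u.1 i ≠ v.1 i then (1:ℕ) else 0)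
          = ∑ v ∈ V, if u.1 i ≠ v i then (1:ℕ) else 0 :=
      fun u => Finset.sum_coe_sort V (fun v => if u.1 i ≠ v i then (1:ℕ) else 0)
    rw [Finset.sum_congr rfl fun u _ => e1 u,
      Finset.sum_coe_sort V (fun u => ∑ v ∈ V, if u i ≠ v i then (1:ℕ) else 0)]
    have e2 : ∀ u ∈ V, (∑ v ∈ V, if u i ≠ v i then (1:ℕ) else 0)
        = if u i = true then fc i else tc i := by
      intro u _
      by_cases hu : u i = true
      · rw [if_pos hu]
        rw [Finset.sum_congr rfl (fun v _ => show (if u i ≠ v i then (1:ℕ) else 0)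
          = if v i = false then 1 else 0 by rw [hu]; cases v i <;> simp)]
        rw [← Finset.card_filter]
      · rw [if_neg hu]
        have hu' : u i = false := by
          cases h : u i
          · rfl
          · exact absurd h hu
        rw [Finset.sum_congr rfl (fun v _ => show (if u i ≠ v i then (1:ℕ) else 0)
          = if v i = true then 1 else 0 by rw [hu']; cases v i <;> simp)]
        rw [← Finset.card_filter]
    rw [Finset.sum_congr rfl e2, Finset.sum_ite, Finset.sum_const, Finset.sum_const, hfilt i]
    simp [smul_eq_mul, mul_comm]
    rfl
  -- closerCount values on edges
  have hab : ∀ (i : Fin n) (v : Vtx n) (hv : v ∈ V) (hvi : v i = true),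
      closerCount (cubeGraph V) ⟨Function.update v i false, DaisyAux.update_mem hdc hv i⟩ ⟨v, hv⟩
        = fc i ∧
      closerCount (cubeGraph V) ⟨v, hv⟩ ⟨Function.update v i false, DaisyAux.update_mem hdc hv i⟩
        = tc i := by
    intro i v hv hvi
    set a : {u : Vtx n // u ∈ V} := ⟨Function.update v i false, DaisyAux.update_mem hdc hv i⟩
    set b : {u : Vtx n // u ∈ V} := ⟨v, hv⟩
    have hai : a.1 i = false := Function.update_self i false v
    have hbi : b.1 i = true := hvi
    have hne' : a.1 i ≠ b.1 i := by rw [hai, hbi]; simp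
    have heq' : ∀ j, j ≠ i → a.1 j = b.1 j := fun j hj => Function.update_of_ne hj _ _
    constructor
    · rw [DaisyAux.closer_eq hdc hne' heq', hai]
    · rw [DaisyAux.closer_eq hdc (Ne.symm hne') (fun j hj => (heq' j hj).symm), hbi]
  -- Mostar index computation
  have HM : (mostar (cubeGraph V) : ℤ)
      = ∑ i : Fin n, (tc i : ℤ) * ((fc i : ℤ) - (tc i : ℤ)) := by
    unfold mostar
    rw [DaisyAux.edge_image hdc x₀, Finset.sum_image (DaisyAux.phi_inj hdc x₀)]
    have hval : ∀ p ∈ DaisyAux.Tset V,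
        (Sym2.lift ⟨fun u v => ((closerCount (cubeGraph V) u v : ℤ)
            - (closerCount (cubeGraph V) v u : ℤ)).natAbs,
          fun a b => by
            show (_ - _ : ℤ).natAbs = (_ - _ : ℤ).natAbs
            rw [← Int.natAbs_neg, neg_sub]⟩ (DaisyAux.phi hdc x₀ p))
          = fc p.1 - tc p.1 := by
      rintro ⟨i, v⟩ hp
      obtain ⟨hv, hvi⟩ := DaisyAux.mem_Tset.1 hp
      have hvi' : v i = true := hvi
      rw [DaisyAux.phi, dif_pos hv, Sym2.lift_mk]
      simp only
      rw [(hab i v hv hvi').1, (hab i v hv hvi').2]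
      have := HT i
      omega
    rw [Finset.sum_congr rfl hval, Nat.cast_sum]
    have hcast : ∀ p ∈ DaisyAux.Tset V,
        ((fc p.1 - tc p.1 : ℕ) : ℤ) = (fc p.1 : ℤ) - (tc p.1 : ℤ) := fun p _ =>
      Nat.cast_sub (HT p.1)
    rw [Finset.sum_congr rfl hcast,
      DaisyAux.sum_Tset (fun i => (fc i : ℤ) - (tc i : ℤ))]
    refine Finset.sum_congr rfl fun i _ => ?_
    rw [nsmul_eq_mul]
  -- Edge count
  have HE : (cubeGraph V).edgeFinset.card = ∑ i : Fin n, tc i := by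
    rw [DaisyAux.edge_image hdc x₀,
      Finset.card_image_of_injOn (fun p hp q hq h =>
        DaisyAux.phi_inj hdc x₀ p hp q hq h),
      Finset.card_eq_sum_ones, DaisyAux.sum_Tset (fun _ => (1:ℕ))]
    simp
    rfl
  -- Final assembly
  have HW' : (2 : ℤ) * (wiener (cubeGraph V) : ℤ)
      = ∑ i : Fin n, ((tc i : ℤ) * fc i + (fc i : ℤ) * tc i) := by
    exact_mod_cast HW
  rw [HW', HM, HE]
  push_cast
  rw [← Finset.sum_sub_distrib, Finset.mul_sum]
  refine Finset.sum_congr rfl fun i _ => ?_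
  have h1 : (tc i : ℤ) + fc i = V.card := by exact_mod_cast HN i
  linear_combination (tc i : ℤ) * h1
end

section
/- Let G be a connected subgraph of the hypercube Q_n that is an isometric subgraph (the graph distance in G between any two vertices equals their Hamming distance). Then the Wiener index of G satisfies W(G) = Σ_{i=1}^n |W_{(i,0)}(G)|·|W_{(i,1)}(G)|, where W_{(i,χ)}(G) is the set of vertices of G whose i-th coordinate equals χ. -/
/-- The semicube `W_{(i,χ)}`: vertices of the induced subgraph on `V`
whose `i`-th coordinate equals `χ` (`false` codes `0`, `true` codes `1`). -/
def semicube {n : ℕ} (V : Finset (Vtx n)) (i : Fin n) (χ : Bool) : Finset (Vtx n) :=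
  V.filter (fun u => u i = χ)

private lemma fiber_sum {α : Type*} [Fintype α] [DecidableEq α]
    (f : α → α → ℕ) (hsymm : ∀ u v, f u v = f v u) (hdiag : ∀ u, f u u = 0)
    (p : Sym2 α) :
    ∑ q ∈ Finset.univ.filter (fun q : α × α => Sym2.mk q.1 q.2 = p), f q.1 q.2
      = 2 * Sym2.lift ⟨f, hsymm⟩ p := by
  induction p using Sym2.ind with
  | _ a b =>
    have hset : Finset.univ.filter (fun q : α × α => Sym2.mk q.1 q.2 = s(a, b))
        = ({(a, b), (b, a)} : Finset (α × α)) := by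
      ext q
      obtain ⟨x, y⟩ := q
      simp only [Finset.mem_filter, Finset.mem_univ, true_and, Sym2.eq_iff,
        Finset.mem_insert, Finset.mem_singleton, Prod.ext_iff]
    rw [hset]
    rcases eq_or_ne a b with rfl | hab
    · simp [hdiag]
    · rw [Finset.sum_insert (by simp [Prod.ext_iff, hab, hab.symm]),
        Finset.sum_singleton]
      simp only [Sym2.lift_mk]
      rw [hsymm b a]
      ring

private lemma two_mul_sum_sym2 {α : Type*} [Fintype α] [DecidableEq α]
    (f : α → α → ℕ) (hsymm : ∀ u v, f u v = f v u) (hdiag : ∀ u, f u u = 0) :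
    2 * ∑ p : Sym2 α, Sym2.lift ⟨f, hsymm⟩ p = ∑ u : α, ∑ v : α, f u v := by
  calc 2 * ∑ p : Sym2 α, Sym2.lift ⟨f, hsymm⟩ p
      = ∑ p : Sym2 α, ∑ q ∈ Finset.univ.filter (fun q : α × α => Sym2.mk q.1 q.2 = p), f q.1 q.2 := by
        rw [Finset.mul_sum]
        exact Finset.sum_congr rfl fun p _ => (fiber_sum f hsymm hdiag p).symm
    _ = ∑ q : α × α, f q.1 q.2 :=
        Finset.sum_fiberwise Finset.univ (fun q : α × α => Sym2.mk q.1 q.2)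
          (fun q : α × α => f q.1 q.2)
    _ = ∑ u : α, ∑ v : α, f u v := by
        rw [← Finset.univ_product_univ, Finset.sum_product]

/-- If the subgraph of `Q_n` induced by `V` is connected and isometric
(graph distance equals Hamming distance), then
`W(G) = ∑_{i=1}^n |W_{(i,0)}(G)|·|W_{(i,1)}(G)|`. -/
theorem wiener_eq_sum_semicube_products {n : ℕ} (V : Finset (Vtx n))
    (hconn : (cubeGraph V).Connected)
    (hiso : ∀ u v : {u : Vtx n // u ∈ V}, (cubeGraph V).dist u v = hammingDist u.1 v.1) :
    wiener (cubeGraph V) =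
      ∑ i : Fin n, (semicube V i false).card * (semicube V i true).card := by
  set α := {u : Vtx n // u ∈ V}
  have hdiag : ∀ u : α, (cubeGraph V).dist u u = 0 := fun u => by simp
  have key := two_mul_sum_sym2 (fun u v : α => (cubeGraph V).dist u v)
    (fun _ _ => SimpleGraph.dist_comm) hdiag
  have hcount : ∀ i : Fin n, ∀ b : Bool,
      (∑ u : α, (if u.1 i = b then 1 else 0)) = (semicube V i b).card := by
    intro i b
    rw [semicube, Finset.card_filter]
    exact Finset.sum_coe_sort V (fun u => if u i = b then 1 else 0)
  have hmain : ∑ u : α, ∑ v : α, (cubeGraph V).dist u v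
      = 2 * ∑ i : Fin n, (semicube V i false).card * (semicube V i true).card := by
    have : ∀ u v : α, (cubeGraph V).dist u v
        = ∑ i : Fin n, (if u.1 i ≠ v.1 i then 1 else 0) := by
      intro u v
      rw [hiso, hammingDist, Finset.card_filter]
    simp only [this]
    have hsplit : ∀ (i : Fin n) (u v : α), (if u.1 i ≠ v.1 i then 1 else 0)
        = (if u.1 i = false then 1 else 0) * (if v.1 i = true then 1 else 0)
          + (if u.1 i = true then 1 else 0) * (if v.1 i = false then 1 else 0) := by
      intro i u v
      cases h1 : u.1 i <;> cases h2 : v.1 i <;> simp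
    calc ∑ u : α, ∑ v : α, ∑ i : Fin n, (if u.1 i ≠ v.1 i then 1 else 0)
        = ∑ u : α, ∑ i : Fin n, ∑ v : α, (if u.1 i ≠ v.1 i then 1 else 0) :=
          Finset.sum_congr rfl fun u _ => Finset.sum_comm
      _ = ∑ i : Fin n, ∑ u : α, ∑ v : α, (if u.1 i ≠ v.1 i then 1 else 0) := Finset.sum_comm
      _ = 2 * ∑ i : Fin n, (semicube V i false).card * (semicube V i true).card := by
          rw [Finset.mul_sum]
          refine Finset.sum_congr rfl fun i _ => ?_
          have hv : ∀ u : α, ∑ v : α, (if u.1 i ≠ v.1 i then 1 else 0)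
              = (if u.1 i = false then 1 else 0) * (semicube V i true).card
                + (if u.1 i = true then 1 else 0) * (semicube V i false).card := by
            intro u
            simp only [hsplit i u]
            rw [Finset.sum_add_distrib, ← Finset.mul_sum, ← Finset.mul_sum,
              hcount i true, hcount i false]
          simp only [hv]
          rw [Finset.sum_add_distrib, ← Finset.sum_mul, ← Finset.sum_mul,
            hcount i false, hcount i true]
          ring
  have : 2 * wiener (cubeGraph V)
      = 2 * ∑ i : Fin n, (semicube V i false).card * (semicube V i true).card := by
    rw [wiener, key, hmain]
  omega
end

section
/- Let G be a daisy cube of dimension n, i.e., the subgraph of the hypercube Q_n induced by a nonempty downward-closed vertex set V ⊆ {0,1}^n. Then the Mostar index of G satisfies Mo(G) = Σ_{i=1}^n |W_{(i,1)}(G)|·(|W_{(i,0)}(G)| − |W_{(i,1)}(G)|), where W_{(i,χ)}(G) is the set of vertices of G whose i-th coordinate equals χ. -/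
section Daisy
variable {n : ℕ} {V : Finset (Vtx n)}

lemma hd_eq_sum (u v : Vtx n) :
    hammingDist u v = ∑ i : Fin n, if u i ≠ v i then 1 else 0 :=
  Finset.card_filter _ _

lemma update_false_le (v : Vtx n) (i : Fin n) : ∀ k, Function.update v i false k ≤ v k := by
  intro k
  rcases eq_or_ne k i with rfl | h
  · simp
  · simp [Function.update_of_ne h]

lemma filter_update_eq (v : Vtx n) (i : Fin n) (hvi : v i = true) :
    (Finset.univ.filter fun k => v k ≠ Function.update v i false k) = {i} := by
  ext k
  rcases eq_or_ne k i with rfl | hk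
  · simp [hvi]
  · simp [Function.update_of_ne hk, hk]

lemma hd_le_length {a b : {u : Vtx n // u ∈ V}} (p : (cubeGraph V).Walk a b) :
    hammingDist a.1 b.1 ≤ p.length := by
  induction p with
  | nil => simp [hammingDist_self]
  | @cons u x w h p ih =>
      have h1 : hammingDist u.1 x.1 = 1 := h
      calc hammingDist u.1 w.1 ≤ hammingDist u.1 x.1 + hammingDist x.1 w.1 :=
            hammingDist_triangle _ _ _
        _ ≤ 1 + p.length := by omega
        _ = (SimpleGraph.Walk.cons h p).length := by simp [Nat.add_comm]

lemma exists_walk (hdc : DownClosed V) :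
    ∀ (k : ℕ) (u : Vtx n) (hu : u ∈ V) (w : Vtx n) (hw : w ∈ V),
      (∀ i, w i ≤ u i) → hammingDist u w = k →
      ∃ p : (cubeGraph V).Walk ⟨u, hu⟩ ⟨w, hw⟩, p.length = k := by
  intro k
  induction k with
  | zero =>
      intro u hu w hw hle hk
      have : u = w := eq_of_hammingDist_eq_zero hk
      subst this
      exact ⟨SimpleGraph.Walk.nil, rfl⟩
  | succ k ih =>
      intro u hu w hw hle hk
      have hne : (Finset.univ.filter fun i => u i ≠ w i).Nonempty := by
        rw [← Finset.card_pos]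
        have : (Finset.univ.filter fun i => u i ≠ w i).card = k + 1 := hk
        omega
      obtain ⟨i, hi⟩ := hne
      have hiu : u i ≠ w i := (Finset.mem_filter.mp hi).2
      have hui : u i = true ∧ w i = false := by
        have := hle i
        revert this hiu; cases u i <;> cases w i <;> simp
      have hu'mem : Function.update u i false ∈ V := hdc _ _ (update_false_le u i) hu
      have hwle : ∀ j, w j ≤ Function.update u i false j := by
        intro j
        rcases eq_or_ne j i with rfl | hj
        · simp [hui.2]
        · simp [Function.update_of_ne hj]; exact hle j
      have hadj : (cubeGraph V).Adj ⟨u, hu⟩ ⟨Function.update u i false, hu'mem⟩ := by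
        show hammingDist u (Function.update u i false) = 1
        show (Finset.univ.filter fun j => u j ≠ Function.update u i false j).card = 1
        rw [filter_update_eq u i hui.1]; rfl
      have hd' : hammingDist (Function.update u i false) w = k := by
        have hset : (Finset.univ.filter fun j => Function.update u i false j ≠ w j)
            = (Finset.univ.filter fun j => u j ≠ w j).erase i := by
          ext j
          rcases eq_or_ne j i with rfl | hj
          · simp [hui.2]
          · simp [Function.update_of_ne hj, hj]
        show (Finset.univ.filter fun j => Function.update u i false j ≠ w j).card = k
        rw [hset, Finset.card_erase_of_mem hi]
        have : (Finset.univ.filter fun i => u i ≠ w i).card = k + 1 := hk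
        omega
      obtain ⟨p, hp⟩ := ih (Function.update u i false) hu'mem w hw hwle hd'
      exact ⟨SimpleGraph.Walk.cons hadj p, by simp [hp]⟩

lemma dist_eq (hdc : DownClosed V) (a b : {u : Vtx n // u ∈ V}) :
    (cubeGraph V).dist a b = hammingDist a.1 b.1 := by
  set m : Vtx n := fun k => a.1 k && b.1 k with hm
  have hma : ∀ k, m k ≤ a.1 k := fun k => by cases h : a.1 k <;> simp [hm, h]
  have hmb : ∀ k, m k ≤ b.1 k := fun k => by cases h : b.1 k <;> simp [hm, h]
  have hmV : m ∈ V := hdc _ _ hma a.2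
  obtain ⟨p, hp⟩ := exists_walk hdc (hammingDist a.1 m) a.1 a.2 m hmV hma rfl
  obtain ⟨q, hq⟩ := exists_walk hdc (hammingDist b.1 m) b.1 b.2 m hmV hmb rfl
  have hsum : hammingDist a.1 m + hammingDist b.1 m = hammingDist a.1 b.1 := by
    rw [hd_eq_sum, hd_eq_sum, hd_eq_sum, ← Finset.sum_add_distrib]
    refine Finset.sum_congr rfl fun i _ => ?_
    cases ha : a.1 i <;> cases hb : b.1 i <;> simp [hm, ha, hb]
  have hwalk : ((p.append q.reverse) : (cubeGraph V).Walk a b).length = hammingDist a.1 b.1 := by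
    simp [hp, hq, hsum]
  apply le_antisymm
  · exact hwalk ▸ SimpleGraph.dist_le _
  · obtain ⟨r, hr⟩ := (SimpleGraph.Walk.reachable (p.append q.reverse)).exists_walk_length_eq_dist
    exact hr ▸ hd_le_length r

lemma closer_eq (hdc : DownClosed V) {a b : {u : Vtx n // u ∈ V}} (j : Fin n)
    (hj : ∀ k, a.1 k ≠ b.1 k ↔ k = j) :
    closerCount (cubeGraph V) a b = (semicube V j (a.1 j)).card := by
  have key : ∀ w : {u : Vtx n // u ∈ V},
      (cubeGraph V).dist w a < (cubeGraph V).dist w b ↔ w.1 j = a.1 j := by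
    intro w
    rw [dist_eq hdc, dist_eq hdc, hd_eq_sum, hd_eq_sum,
      ← Finset.add_sum_erase _ _ (Finset.mem_univ j),
      ← Finset.add_sum_erase _ (fun i => if w.1 i ≠ b.1 i then 1 else 0) (Finset.mem_univ j)]
    have hsame : ∑ k ∈ Finset.univ.erase j, (if w.1 k ≠ a.1 k then 1 else 0)
        = ∑ k ∈ Finset.univ.erase j, (if w.1 k ≠ b.1 k then 1 else 0) := by
      refine Finset.sum_congr rfl fun k hk => ?_
      have hkj : k ≠ j := Finset.ne_of_mem_erase hk
      have hab : a.1 k = b.1 k := by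
        by_contra hne
        exact hkj ((hj k).mp hne)
      rw [hab]
    rw [hsame, Nat.add_lt_add_iff_right]
    have habj : a.1 j ≠ b.1 j := (hj j).mpr rfl
    revert habj
    cases ha : a.1 j <;> cases hb : b.1 j <;> cases hw : w.1 j <;> simp
  unfold closerCount
  rw [Nat.card_congr (Equiv.subtypeEquivRight key)]
  rw [Nat.card_congr (Equiv.subtypeSubtypeEquivSubtypeInter (fun u : Vtx n => u ∈ V)
    (fun u => u j = a.1 j))]
  rw [Nat.card_congr (Equiv.subtypeEquivRight (fun u : Vtx n =>
    (Finset.mem_filter (s := V) (p := fun u => u j = a.1 j)).symm))]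
  exact Nat.card_eq_finsetCard _

lemma semicube_card_le (hdc : DownClosed V) (j : Fin n) :
    (semicube V j true).card ≤ (semicube V j false).card := by
  apply Finset.card_le_card_of_injOn (fun u => Function.update u j false)
  · intro u hu
    simp only [semicube, Finset.mem_coe, Finset.mem_filter] at hu ⊢
    exact ⟨hdc _ _ (update_false_le u j) hu.1, by simp⟩
  · intro u hu v hv h
    simp only [Finset.coe_filter, Set.mem_setOf_eq, semicube] at hu hv
    funext k
    rcases eq_or_ne k j with rfl | hk
    · rw [hu.2, hv.2]
    · have := congrFun h k
      simpa [Function.update_of_ne hk] using this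

def etop (e : Sym2 {u : Vtx n // u ∈ V}) : Vtx n :=
  Sym2.lift ⟨fun a b => fun k => a.1 k || b.1 k,
    fun a b => by funext k; exact Bool.or_comm _ _⟩ e

def ebot (e : Sym2 {u : Vtx n // u ∈ V}) : Vtx n :=
  Sym2.lift ⟨fun a b => fun k => a.1 k && b.1 k,
    fun a b => by funext k; exact Bool.and_comm _ _⟩ e

lemma edge_exists_j {a b : {u : Vtx n // u ∈ V}} (hadj : (cubeGraph V).Adj a b) :
    ∃ j : Fin n, ∀ k, a.1 k ≠ b.1 k ↔ k = j := by
  have h1 : (Finset.univ.filter fun k => a.1 k ≠ b.1 k).card = 1 := hadj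
  obtain ⟨j, hj⟩ := Finset.card_eq_one.mp h1
  refine ⟨j, fun k => ?_⟩
  constructor
  · intro h
    have : k ∈ (Finset.univ.filter fun k => a.1 k ≠ b.1 k) := by simp [h]
    rw [hj] at this; simpa using this
  · intro hkj
    have hmem : j ∈ (Finset.univ.filter fun k => a.1 k ≠ b.1 k) := by
      rw [hj]; exact Finset.mem_singleton_self j
    rw [hkj]
    exact (Finset.mem_filter.mp hmem).2

lemma edge_filter_nonempty {e : Sym2 {u : Vtx n // u ∈ V}}
    (he : e ∈ (cubeGraph V).edgeFinset) :
    (Finset.univ.filter fun k => etop e k ≠ ebot e k).Nonempty := by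
  induction e using Sym2.ind with
  | _ a b =>
    have hadj : (cubeGraph V).Adj a b := by
      rw [SimpleGraph.mem_edgeFinset, SimpleGraph.mem_edgeSet] at he; exact he
    obtain ⟨j, hj⟩ := edge_exists_j hadj
    refine ⟨j, ?_⟩
    rw [Finset.mem_filter]
    simp only [Finset.mem_filter, Finset.mem_univ, true_and, etop, ebot, Sym2.lift_mk]
    have : a.1 j ≠ b.1 j := (hj j).mpr rfl
    revert this; cases a.1 j <;> cases b.1 j <;> simp

noncomputable def eIdx (e : Sym2 {u : Vtx n // u ∈ V})
    (h : (Finset.univ.filter fun k => etop e k ≠ ebot e k).Nonempty) : Fin n :=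
  Finset.min' _ h

lemma edge_repr {e : Sym2 {u : Vtx n // u ∈ V}} (he : e ∈ (cubeGraph V).edgeFinset) :
    ∃ (h2 : etop e ∈ V) (h3 : ebot e ∈ V),
      (∀ k, etop e k ≠ ebot e k ↔ k = eIdx e (edge_filter_nonempty he)) ∧
      etop e (eIdx e (edge_filter_nonempty he)) = true ∧
      ebot e (eIdx e (edge_filter_nonempty he)) = false ∧
      (∀ k, ebot e k ≤ etop e k) ∧
      e = Sym2.mk (α := {u : Vtx n // u ∈ V}) ⟨etop e, h2⟩ ⟨ebot e, h3⟩ := by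
  induction e using Sym2.ind with
  | _ a b =>
    have hadj : (cubeGraph V).Adj a b := by
      rw [SimpleGraph.mem_edgeFinset, SimpleGraph.mem_edgeSet] at he; exact he
    obtain ⟨j, hj⟩ := edge_exists_j hadj
    have htop : ∀ k, etop (Sym2.mk a b) k = (a.1 k || b.1 k) := fun k => rfl
    have hbot : ∀ k, ebot (Sym2.mk a b) k = (a.1 k && b.1 k) := fun k => rfl
    have hiff : ∀ k, etop (Sym2.mk a b) k ≠ ebot (Sym2.mk a b) k ↔ a.1 k ≠ b.1 k := by
      intro k; rw [htop, hbot]; cases a.1 k <;> cases b.1 k <;> simp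
    have hfil : (Finset.univ.filter fun k =>
        etop (Sym2.mk a b) k ≠ ebot (Sym2.mk a b) k) = {j} := by
      ext k
      simp only [Finset.mem_filter, Finset.mem_univ, true_and, Finset.mem_singleton, hiff, hj]
    have hidx : eIdx (Sym2.mk a b) (edge_filter_nonempty he) = j := by
      unfold eIdx
      simp [hfil]
    have habj : a.1 j ≠ b.1 j := (hj j).mpr rfl
    have heqk : ∀ k, k ≠ j → a.1 k = b.1 k := by
      intro k hk
      by_contra hne
      exact hk ((hj k).mp hne)
    rcases Bool.eq_false_or_eq_true (a.1 j) with haj | haj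
    · -- a has true at j : top = a, bot = b
      have hbj : b.1 j = false := by
        rcases Bool.eq_false_or_eq_true (b.1 j) with h | h
        · exact absurd (haj.trans h.symm) habj
        · exact h
      have htopa : etop (Sym2.mk a b) = a.1 := by
        funext k
        rw [htop]
        rcases eq_or_ne k j with rfl | hk
        · simp [haj, hbj]
        · rw [heqk k hk]; simp
      have hbotb : ebot (Sym2.mk a b) = b.1 := by
        funext k
        rw [hbot]
        rcases eq_or_ne k j with rfl | hk
        · simp [haj, hbj]
        · rw [heqk k hk]; simp
      refine ⟨htopa ▸ a.2, hbotb ▸ b.2, ?_, ?_, ?_, ?_, ?_⟩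
      · intro k; rw [hiff, hidx]
        constructor
        · intro h; exact (hj k).mp h
        · intro h; rw [h]; exact habj
      · rw [hidx, htopa, haj]
      · rw [hidx, hbotb, hbj]
      · intro k; rw [htop, hbot]; cases a.1 k <;> cases b.1 k <;> simp
      · exact congrArg₂ Sym2.mk
          (Subtype.ext htopa.symm) (Subtype.ext hbotb.symm)
    · -- b has true at j : top = b, bot = a
      have hbj : b.1 j = true := by
        rcases Bool.eq_false_or_eq_true (b.1 j) with h | h
        · exact h
        · exact absurd (haj.trans h.symm) habj
      have htopb : etop (Sym2.mk a b) = b.1 := by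
        funext k
        rw [htop]
        rcases eq_or_ne k j with rfl | hk
        · simp [haj, hbj]
        · rw [heqk k hk]; simp
      have hbota : ebot (Sym2.mk a b) = a.1 := by
        funext k
        rw [hbot]
        rcases eq_or_ne k j with rfl | hk
        · simp [haj, hbj]
        · rw [heqk k hk]; simp
      refine ⟨htopb ▸ b.2, hbota ▸ a.2, ?_, ?_, ?_, ?_, ?_⟩
      · intro k; rw [hiff, hidx]
        constructor
        · intro h; exact (hj k).mp h
        · intro h; rw [h]; exact habj
      · rw [hidx, htopb, hbj]
      · rw [hidx, hbota, haj]
      · intro k; rw [htop, hbot]; cases a.1 k <;> cases b.1 k <;> simp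
      · have hswap : Sym2.mk b a
            = Sym2.mk (⟨etop (Sym2.mk a b), htopb ▸ b.2⟩ : {u : Vtx n // u ∈ V})
                (⟨ebot (Sym2.mk a b), hbota ▸ a.2⟩ : {u : Vtx n // u ∈ V}) := by
          exact congrArg₂ Sym2.mk
            (Subtype.ext htopb.symm) (Subtype.ext hbota.symm)
        exact (Sym2.eq_swap).trans hswap

end Daisy

/-- For a daisy cube `G`,
`Mo(G) = ∑_{i=1}^n |W_{(i,1)}(G)|·(|W_{(i,0)}(G)| - |W_{(i,1)}(G)|)`. -/
theorem daisy_mostar_eq {n : ℕ} (V : Finset (Vtx n))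
    (hne : V.Nonempty) (hdc : DownClosed V) :
    (mostar (cubeGraph V) : ℤ) =
      ∑ i : Fin n, ((semicube V i true).card : ℤ) *
        (((semicube V i false).card : ℤ) - ((semicube V i true).card : ℤ)) := by
  classical
  have hrhs : (∑ i : Fin n, ((semicube V i true).card : ℤ) *
        (((semicube V i false).card : ℤ) - ((semicube V i true).card : ℤ)))
      = ∑ x ∈ Finset.univ.sigma (fun i : Fin n => semicube V i true),
          (((semicube V x.1 false).card : ℤ) - ((semicube V x.1 true).card : ℤ)) := by
    rw [Finset.sum_sigma]
    refine Finset.sum_congr rfl fun i _ => ?_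
    dsimp only
    rw [Finset.sum_const, nsmul_eq_mul]
  rw [hrhs, mostar, Nat.cast_sum]
  refine Finset.sum_bij'
    (fun e (he : e ∈ (cubeGraph V).edgeFinset) =>
      (⟨eIdx e (edge_filter_nonempty he), etop e⟩ : (_ : Fin n) × Vtx n))
    (fun x hx =>
      Sym2.mk (α := {u : Vtx n // u ∈ V}) ⟨x.2, (Finset.mem_filter.mp (Finset.mem_sigma.mp hx).2).1⟩
        ⟨Function.update x.2 x.1 false,
          hdc _ _ (update_false_le x.2 x.1)
            (Finset.mem_filter.mp (Finset.mem_sigma.mp hx).2).1⟩)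
    ?_ ?_ ?_ ?_ ?_
  · -- forward membership
    intro e he
    obtain ⟨h2, h3, hiff, htj, hbj, hle, heq⟩ := edge_repr he
    refine Finset.mem_sigma.mpr ⟨Finset.mem_univ _, ?_⟩
    exact Finset.mem_filter.mpr ⟨h2, htj⟩
  · -- backward membership
    intro x hx
    have hxV : x.2 ∈ V := (Finset.mem_filter.mp (Finset.mem_sigma.mp hx).2).1
    have hxt : x.2 x.1 = true := (Finset.mem_filter.mp (Finset.mem_sigma.mp hx).2).2
    rw [SimpleGraph.mem_edgeFinset, SimpleGraph.mem_edgeSet]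
    show hammingDist x.2 (Function.update x.2 x.1 false) = 1
    show (Finset.univ.filter fun k => x.2 k ≠ Function.update x.2 x.1 false k).card = 1
    rw [filter_update_eq x.2 x.1 hxt]; rfl
  · -- left inverse
    intro e he
    obtain ⟨h2, h3, hiff, htj, hbj, hle, heq⟩ := edge_repr he
    set j := eIdx e (edge_filter_nonempty he) with hjdef
    have hupd : Function.update (etop e) j false = ebot e := by
      funext k
      rcases eq_or_ne k j with rfl | hk
      · rw [Function.update_self, hbj]
      · rw [Function.update_of_ne hk]
        by_contra hne
        exact hk ((hiff k).mp hne)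
    refine Eq.trans ?_ heq.symm
    exact congrArg₂ Sym2.mk rfl (Subtype.ext hupd)
  · -- right inverse
    intro x hx
    obtain ⟨i0, v⟩ := x
    have hxV : v ∈ V := (Finset.mem_filter.mp (Finset.mem_sigma.mp hx).2).1
    have hxt : v i0 = true := (Finset.mem_filter.mp (Finset.mem_sigma.mp hx).2).2
    set A : {u : Vtx n // u ∈ V} := ⟨v, hxV⟩
    set B : {u : Vtx n // u ∈ V} :=
      ⟨Function.update v i0 false, hdc _ _ (update_false_le v i0) hxV⟩ with hB
    have htopv : etop (Sym2.mk A B) = v := by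
      funext k
      show (v k || Function.update v i0 false k) = v k
      rcases eq_or_ne k i0 with rfl | hk
      · simp [hxt]
      · simp [Function.update_of_ne hk]
    have hbotv : ebot (Sym2.mk A B) = Function.update v i0 false := by
      funext k
      show (v k && Function.update v i0 false k) = Function.update v i0 false k
      rcases eq_or_ne k i0 with rfl | hk
      · simp [hxt]
      · simp [Function.update_of_ne hk]
    have hfil : (Finset.univ.filter fun k =>
        etop (Sym2.mk A B) k ≠ ebot (Sym2.mk A B) k) = {i0} := by
      rw [htopv, hbotv, filter_update_eq v i0 hxt]
    have hidx : ∀ h, eIdx (Sym2.mk A B) h = i0 := by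
      intro h
      unfold eIdx
      simp [hfil]
    show (⟨eIdx (Sym2.mk A B) _, etop (Sym2.mk A B)⟩ : (_ : Fin n) × Vtx n) = ⟨i0, v⟩
    rw [hidx, htopv]
  · -- values
    intro e he
    obtain ⟨h2, h3, hiff, htj, hbj, hle, heq⟩ := edge_repr he
    set j := eIdx e (edge_filter_nonempty he) with hjdef
    set A : {u : Vtx n // u ∈ V} := ⟨etop e, h2⟩
    set B : {u : Vtx n // u ∈ V} := ⟨ebot e, h3⟩
    have hCA : closerCount (cubeGraph V) A B = (semicube V j true).card := by
      have := closer_eq hdc (a := A) (b := B) j hiff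
      rwa [show A.1 j = true from htj] at this
    have hCB : closerCount (cubeGraph V) B A = (semicube V j false).card := by
      have hiff' : ∀ k, B.1 k ≠ A.1 k ↔ k = j := by
        intro k
        rw [ne_comm]
        exact hiff k
      have := closer_eq hdc (a := B) (b := A) j hiff'
      rwa [show B.1 j = false from hbj] at this
    have hmono : ((semicube V j true).card : ℤ) ≤ ((semicube V j false).card : ℤ) := by
      exact_mod_cast semicube_card_le hdc j
    conv_lhs => rw [heq]
    rw [Sym2.lift_mk]
    show ((((closerCount (cubeGraph V) A B : ℤ)
        - (closerCount (cubeGraph V) B A : ℤ)).natAbs : ℤ)) = _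
    rw [hCA, hCB]
    rw [Int.ofNat_natAbs_of_nonpos (by omega)]
    push_cast
    ring
end

section
/- Let G be a daisy cube of dimension n, i.e., the subgraph of the hypercube Q_n induced by a nonempty downward-closed vertex set V ⊆ {0,1}^n. Then W(G) − Mo(G) = Σ_{i=1}^n |W_{(i,1)}(G)|², where W(G) is the Wiener index, Mo(G) the Mostar index, and W_{(i,1)}(G) the set of vertices of G whose i-th coordinate equals 1. -/
section Helpers

variable {n : ℕ}

lemma ham_eq_sum (x y : Vtx n) :
    hammingDist x y = ∑ i : Fin n, (if x i ≠ y i then 1 else 0) := by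
  rw [hammingDist, Finset.card_filter]

lemma ham_update_lt {x y : Vtx n} {i : Fin n} (h : x i ≠ y i) :
    hammingDist (Function.update x i (y i)) y + 1 = hammingDist x y := by
  unfold hammingDist
  have : (Finset.univ.filter fun j => Function.update x i (y i) j ≠ y j)
      = (Finset.univ.filter fun j => x j ≠ y j).erase i := by
    ext j
    rcases eq_or_ne j i with rfl | hj
    · simp [Function.update_self]
    · simp [Function.update_of_ne hj, hj]
  rw [this, Finset.card_erase_of_mem (by simpa using h)]
  have : 0 < (Finset.univ.filter fun j => x j ≠ y j).card :=
    Finset.card_pos.2 ⟨i, by simpa using h⟩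
  omega

lemma ham_update_adj (x : Vtx n) {i : Fin n} {b : Bool} (h : x i ≠ b) :
    hammingDist x (Function.update x i b) = 1 := by
  unfold hammingDist
  rw [Finset.card_eq_one]
  refine ⟨i, ?_⟩
  ext j
  rcases eq_or_ne j i with rfl | hj
  · simp [Function.update_self, h]
  · simp [Function.update_of_ne hj, hj]

end Helpers

abbrev VT {n : ℕ} (V : Finset (Vtx n)) := {u : Vtx n // u ∈ V}

section Walks

variable {n : ℕ} {V : Finset (Vtx n)} (hdc : DownClosed V)

lemma update_false_mem (hdc : DownClosed V) {u : Vtx n} (hu : u ∈ V) (i : Fin n) :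
    Function.update u i false ∈ V := by
  refine hdc _ u (fun j => ?_) hu
  rcases eq_or_ne j i with rfl | hj
  · simp [Function.update_self]
  · simp [Function.update_of_ne hj]

lemma exists_walk_s6 (hdc : DownClosed V) :
    ∀ (d : ℕ) (u v : VT V), hammingDist u.1 v.1 ≤ d →
      ∃ w : (cubeGraph V).Walk u v, w.length = hammingDist u.1 v.1 := by
  intro d
  induction d with
  | zero =>
    intro u v h
    have huv : u = v := Subtype.ext (hamming_zero_eq_dist.mp (Nat.le_zero.mp h).symm)
    subst huv
    exact ⟨SimpleGraph.Walk.nil, by simp [hammingDist_self]⟩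
  | succ d ih =>
    intro u v h
    rcases Nat.eq_zero_or_pos (hammingDist u.1 v.1) with h0 | hpos
    · have huv : u = v := Subtype.ext (hamming_zero_eq_dist.mp h0.symm)
      subst huv
      exact ⟨SimpleGraph.Walk.nil, by simp [hammingDist_self]⟩
    · have : ∃ i, u.1 i ≠ v.1 i := by
        by_contra hc
        push_neg at hc
        have : u.1 = v.1 := funext hc
        simp [this, hammingDist_self] at hpos
      obtain ⟨i, hi⟩ := this
      by_cases hui : u.1 i = true
      · have hvif : v.1 i = false := by
          cases hv : v.1 i <;> simp [hv, hui] at hi ⊢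
        set u' : Vtx n := Function.update u.1 i false with hu'
        have hmem : u' ∈ V := update_false_mem hdc u.2 i
        have hadj : (cubeGraph V).Adj u ⟨u', hmem⟩ :=
          ham_update_adj u.1 (by simp [hui])
        have hdrop : hammingDist u' v.1 + 1 = hammingDist u.1 v.1 := by
          have := ham_update_lt (x := u.1) (y := v.1) (i := i) hi
          rwa [hvif] at this
        obtain ⟨w, hw⟩ := ih ⟨u', hmem⟩ v (show hammingDist u' v.1 ≤ d by omega)
        refine ⟨SimpleGraph.Walk.cons hadj w, ?_⟩
        rw [SimpleGraph.Walk.length_cons, hw]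
        show hammingDist u' v.1 + 1 = _
        omega
      · have hvit : v.1 i = true := by
          cases hv : v.1 i
          · cases hu : u.1 i
            · rw [hu, hv] at hi; exact absurd rfl hi
            · exact absurd hu hui
          · rfl
        have hui' : u.1 i = false := by
          cases hu : u.1 i
          · rfl
          · exact absurd hu hui
        set v' : Vtx n := Function.update v.1 i false with hv'
        have hmem : v' ∈ V := update_false_mem hdc v.2 i
        have hadj : (cubeGraph V).Adj ⟨v', hmem⟩ v := by
          show hammingDist v' v.1 = 1
          rw [hammingDist_comm]
          exact ham_update_adj v.1 (by simp [hvit])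
        have hdrop : hammingDist u.1 v' + 1 = hammingDist u.1 v.1 := by
          have := ham_update_lt (x := v.1) (y := u.1) (i := i) (Ne.symm hi)
          rw [hui'] at this
          rw [hammingDist_comm u.1 v', hammingDist_comm u.1 v.1]
          exact this
        obtain ⟨w, hw⟩ := ih u ⟨v', hmem⟩ (show hammingDist u.1 v' ≤ d by omega)
        refine ⟨w.concat hadj, ?_⟩
        rw [SimpleGraph.Walk.length_concat, hw]
        show hammingDist u.1 v' + 1 = _
        omega

lemma walk_ge {u v : VT V} (w : (cubeGraph V).Walk u v) :
    hammingDist u.1 v.1 ≤ w.length := by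
  induction w with
  | nil => simp [hammingDist_self]
  | @cons a b c hadj p ih =>
    have h1 : hammingDist a.1 b.1 = 1 := hadj
    have h2 := hammingDist_triangle a.1 b.1 c.1
    rw [SimpleGraph.Walk.length_cons]
    omega

lemma dist_eq_ham (hdc : DownClosed V) (u v : VT V) :
    (cubeGraph V).dist u v = hammingDist u.1 v.1 := by
  obtain ⟨w, hw⟩ := exists_walk_s6 hdc (hammingDist u.1 v.1) u v le_rfl
  refine le_antisymm (hw ▸ SimpleGraph.dist_le w) ?_
  obtain ⟨p, hp⟩ := (SimpleGraph.Walk.reachable w).exists_walk_length_eq_dist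
  exact hp ▸ walk_ge p
section Sym2Sum

variable {β : Type*} [Fintype β] [DecidableEq β]

lemma fiber_sum_s6 (f : β → β → ℕ) (hf : ∀ a b, f a b = f b a)
    (hd : ∀ a, f a a = 0) (p : Sym2 β) :
    ∑ x ∈ (Finset.univ ×ˢ Finset.univ).filter
        (fun x : β × β => Sym2.mk x.1 x.2 = p), f x.1 x.2 =
      2 * Sym2.lift ⟨f, hf⟩ p := by
  induction p using Sym2.inductionOn with
  | hf a b =>
    rw [Sym2.lift_mk]
    rcases eq_or_ne a b with rfl | hab
    · have hset : ((Finset.univ ×ˢ Finset.univ).filter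
          fun x : β × β => Sym2.mk x.1 x.2 = s(a, a)) = {(a, a)} := by
        ext ⟨x1, x2⟩
        simp only [Finset.mem_filter, Finset.mem_product, Finset.mem_univ, true_and,
          Finset.mem_singleton, Prod.ext_iff]
        show s(x1, x2) = s(a, a) ↔ _
        rw [Sym2.eq_iff]
        try tauto
      rw [hset, Finset.sum_singleton]
      simp [hd]
    · have hset : ((Finset.univ ×ˢ Finset.univ).filter
          fun x : β × β => Sym2.mk x.1 x.2 = s(a, b)) = {(a, b), (b, a)} := by
        ext ⟨x1, x2⟩
        simp only [Finset.mem_filter, Finset.mem_product, Finset.mem_univ, true_and,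
          Finset.mem_insert, Finset.mem_singleton, Prod.ext_iff]
        show s(x1, x2) = s(a, b) ↔ _
        rw [Sym2.eq_iff]
        try tauto
      rw [hset, Finset.sum_insert (by simp [Prod.ext_iff, hab]), Finset.sum_singleton]
      show f a b + f b a = 2 * f a b
      rw [hf b a]
      ring

lemma two_mul_sum_sym2_s6 (f : β → β → ℕ) (hf : ∀ a b, f a b = f b a)
    (hd : ∀ a, f a a = 0) :
    2 * ∑ p : Sym2 β, Sym2.lift ⟨f, hf⟩ p = ∑ a : β, ∑ b : β, f a b := by
  rw [← Finset.sum_product']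
  rw [← Finset.sum_fiberwise_of_maps_to (g := fun x : β × β => Sym2.mk x.1 x.2)
      (t := Finset.univ) (fun x _ => Finset.mem_univ _) (fun x => f x.1 x.2)]
  rw [Finset.mul_sum]
  exact Finset.sum_congr rfl fun p _ => (fiber_sum_s6 f hf hd p).symm

end Sym2Sum
section Count

variable {n : ℕ} {V : Finset (Vtx n)}

lemma card_filter_coord (i : Fin n) (b : Bool) :
    (Finset.univ.filter fun w : VT V => w.1 i = b).card = (semicube V i b).card := by
  apply Finset.card_bij (fun w _ => w.1)
  · intro a ha
    simp only [semicube, Finset.mem_filter]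
    exact ⟨a.2, (Finset.mem_filter.mp ha).2⟩
  · intro a _ c _ h
    exact Subtype.ext h
  · intro c hc
    simp only [semicube, Finset.mem_filter] at hc
    exact ⟨⟨c, hc.1⟩, by simp [hc.2], rfl⟩

lemma w1_le_w0 (hdc : DownClosed V) (i : Fin n) :
    (semicube V i true).card ≤ (semicube V i false).card := by
  apply Finset.card_le_card_of_injOn (fun u => Function.update u i false)
  · intro u hu
    simp only [semicube, Finset.mem_coe, Finset.mem_filter] at hu ⊢
    exact ⟨update_false_mem hdc hu.1 i, by simp⟩
  · intro u hu v hv h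
    simp only [semicube, Finset.mem_coe, Finset.mem_filter] at hu hv
    funext j
    rcases eq_or_ne j i with rfl | hj
    · rw [hu.2, hv.2]
    · have := congrFun h j
      simpa [Function.update_of_ne hj] using this

lemma adj_diff_eq {u v : VT V} (h : (cubeGraph V).Adj u v) {i : Fin n}
    (hi : u.1 i ≠ v.1 i) : v.1 = Function.update u.1 i (!u.1 i) := by
  have h1 : hammingDist u.1 v.1 = 1 := h
  rw [hammingDist, Finset.card_eq_one] at h1
  obtain ⟨j, hj⟩ := h1
  have hij : i = j := by
    have : i ∈ (Finset.univ.filter fun k => u.1 k ≠ v.1 k) := by simpa using hi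
    rw [hj] at this
    simpa using this
  subst hij
  funext k
  rcases eq_or_ne k i with rfl | hk
  · rw [Function.update_self]
    cases hu : u.1 k <;> cases hv : v.1 k <;> simp_all
  · rw [Function.update_of_ne hk]
    by_contra hc
    have : k ∈ (Finset.univ.filter fun m => u.1 m ≠ v.1 m) := by
      simpa using fun h' => hc h'.symm
    rw [hj] at this
    simp at this
    exact hk this

end Count
section Closer

variable {n : ℕ} {V : Finset (Vtx n)}

lemma ham_compare {u w : Vtx n} {i : Fin n} :
    hammingDist w u < hammingDist w (Function.update u i (!u i)) ↔ w i = u i := by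
  set v := Function.update u i (!u i) with hv
  have hvj : ∀ j, j ≠ i → v j = u j := fun j hj => Function.update_of_ne hj _ _
  have h1 : hammingDist w u
      = (∑ j ∈ Finset.univ.erase i, if w j ≠ u j then 1 else 0)
        + (if w i ≠ u i then 1 else 0) := by
    rw [ham_eq_sum, ← Finset.sum_erase_add _ _ (Finset.mem_univ i)]
  have h2 : hammingDist w v
      = (∑ j ∈ Finset.univ.erase i, if w j ≠ u j then 1 else 0)
        + (if w i ≠ v i then 1 else 0) := by
    rw [ham_eq_sum, ← Finset.sum_erase_add _ _ (Finset.mem_univ i)]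
    congr 1
    refine Finset.sum_congr rfl fun j hj => ?_
    rw [hvj j (Finset.mem_erase.mp hj).1]
  have hvi : v i = !u i := Function.update_self _ _ _
  rw [h1, h2, hvi]
  cases hw : w i <;> cases hu : u i <;> simp

lemma closer_eq_s6 (hdc : DownClosed V) {u v : VT V} (h : (cubeGraph V).Adj u v)
    {i : Fin n} (hi : u.1 i ≠ v.1 i) :
    closerCount (cubeGraph V) u v = (semicube V i (u.1 i)).card := by
  have hveq : v.1 = Function.update u.1 i (!u.1 i) := adj_diff_eq h hi
  rw [closerCount, Nat.card_eq_fintype_card, Fintype.card_subtype,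
    ← card_filter_coord i (u.1 i)]
  congr 1
  refine Finset.filter_congr fun w _ => ?_
  rw [dist_eq_ham hdc, dist_eq_ham hdc, hveq]
  exact ham_compare

end Closer
section Wiener

variable {n : ℕ} {V : Finset (Vtx n)}

lemma pair_count (i : Fin n) :
    (∑ u : VT V, ∑ v : VT V, if u.1 i ≠ v.1 i then 1 else 0)
      = 2 * ((semicube V i true).card * (semicube V i false).card) := by
  have inner : ∀ u : VT V, (∑ v : VT V, if u.1 i ≠ v.1 i then 1 else 0)
      = (semicube V i (!u.1 i)).card := by
    intro u
    rw [← card_filter_coord i (!u.1 i), Finset.card_filter]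
    refine Finset.sum_congr rfl fun v _ => ?_
    congr 1
    simp only [eq_iff_iff]
    cases hu : u.1 i <;> cases hv : v.1 i <;> simp [hu, hv]
  rw [Finset.sum_congr rfl fun u _ => inner u]
  rw [← Finset.sum_filter_add_sum_filter_not Finset.univ (fun u : VT V => u.1 i = true)]
  have e1 : (∑ u ∈ Finset.univ.filter (fun u : VT V => u.1 i = true),
      (semicube V i (!u.1 i)).card)
      = (semicube V i true).card * (semicube V i false).card := by
    rw [Finset.sum_congr rfl (fun u hu => by
      rw [(Finset.mem_filter.mp hu).2, Bool.not_true])]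
    rw [Finset.sum_const, card_filter_coord i true, smul_eq_mul]
  have e2 : (∑ u ∈ Finset.univ.filter (fun u : VT V => ¬(u.1 i = true)),
      (semicube V i (!u.1 i)).card)
      = (semicube V i false).card * (semicube V i true).card := by
    rw [Finset.sum_congr rfl (fun u hu => by
      have : u.1 i = false := by
        have := (Finset.mem_filter.mp hu).2
        cases h : u.1 i
        · rfl
        · exact absurd h this
      rw [this, Bool.not_false])]
    rw [Finset.sum_const, smul_eq_mul]
    congr 1
    rw [← card_filter_coord i false]
    congr 1
    ext u
    cases h : u.1 i <;> simp [h]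
  rw [e1, e2]
  ring

lemma wiener_eq (hdc : DownClosed V) (hne : V.Nonempty) :
    wiener (cubeGraph V)
      = ∑ i : Fin n, (semicube V i true).card * (semicube V i false).card := by
  have key := two_mul_sum_sym2_s6 (β := VT V)
    (fun u v => (cubeGraph V).dist u v)
    (fun _ _ => SimpleGraph.dist_comm)
    (fun _ => SimpleGraph.dist_self)
  have hcast : (∑ a : VT V, ∑ b : VT V, (cubeGraph V).dist a b)
      = ∑ i : Fin n, 2 * ((semicube V i true).card * (semicube V i false).card) := by
    have : ∀ a b : VT V, (cubeGraph V).dist a b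
        = ∑ i : Fin n, if a.1 i ≠ b.1 i then 1 else 0 := by
      intro a b
      rw [dist_eq_ham hdc, ham_eq_sum]
    simp only [this]
    have step1 : (∑ a : VT V, ∑ b : VT V, ∑ i : Fin n,
          if a.1 i ≠ b.1 i then 1 else 0)
        = ∑ a : VT V, ∑ i : Fin n, ∑ b : VT V,
          if a.1 i ≠ b.1 i then 1 else 0 :=
      Finset.sum_congr rfl fun a _ => Finset.sum_comm
    rw [step1, Finset.sum_comm]
    exact Finset.sum_congr rfl fun i _ => pair_count i
  rw [hcast, ← Finset.mul_sum] at key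
  exact Nat.eq_of_mul_eq_mul_left (by norm_num) key

end Wiener
section Mostar

variable {n : ℕ} {V : Finset (Vtx n)}

noncomputable def gfun (V : Finset (Vtx n)) : VT V → VT V → ℕ := fun u v =>
  if (cubeGraph V).Adj u v then
    ((closerCount (cubeGraph V) u v : ℤ) - (closerCount (cubeGraph V) v u : ℤ)).natAbs
  else 0

lemma g_symm (V : Finset (Vtx n)) : ∀ a b, gfun V a b = gfun V b a := by
  intro a b
  unfold gfun
  by_cases h : (cubeGraph V).Adj a b
  · rw [if_pos h, if_pos h.symm, ← Int.natAbs_neg, neg_sub]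
  · rw [if_neg h, if_neg (fun h' => h h'.symm)]

lemma g_diag (V : Finset (Vtx n)) : ∀ a, gfun V a a = 0 := fun a =>
  if_neg ((cubeGraph V).irrefl)

lemma mostar_eq_sym2 :
    mostar (cubeGraph V) = ∑ p : Sym2 (VT V), Sym2.lift ⟨gfun V, g_symm V⟩ p := by
  rw [mostar]
  have h1 : ∀ p ∈ (cubeGraph V).edgeFinset,
      Sym2.lift ⟨fun u v => ((closerCount (cubeGraph V) u v : ℤ)
          - (closerCount (cubeGraph V) v u : ℤ)).natAbs, fun a b => by
        show (_ - _ : ℤ).natAbs = (_ - _ : ℤ).natAbs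
        rw [← Int.natAbs_neg, neg_sub]⟩ p
        = Sym2.lift ⟨gfun V, g_symm V⟩ p := by
    intro p hp
    induction p using Sym2.inductionOn with
    | hf a b =>
      rw [SimpleGraph.mem_edgeFinset, SimpleGraph.mem_edgeSet] at hp
      rw [Sym2.lift_mk, Sym2.lift_mk]
      show _ = gfun V a b
      rw [gfun, if_pos hp]
  have h2 : ∀ p ∈ (Finset.univ : Finset (Sym2 (VT V))),
      p ∉ (cubeGraph V).edgeFinset → Sym2.lift ⟨gfun V, g_symm V⟩ p = 0 := by
    intro p _ hp
    induction p using Sym2.inductionOn with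
    | hf a b =>
      rw [SimpleGraph.mem_edgeFinset, SimpleGraph.mem_edgeSet] at hp
      rw [Sym2.lift_mk]
      show gfun V a b = 0
      rw [gfun, if_neg hp]
  rw [Finset.sum_congr rfl h1]
  exact Finset.sum_subset (Finset.subset_univ _) h2

end Mostar
section GExpand

variable {n : ℕ} {V : Finset (Vtx n)}

lemma g_expand (hdc : DownClosed V) (u v : VT V) :
    gfun V u v = ∑ i : Fin n,
      if (cubeGraph V).Adj u v ∧ u.1 i ≠ v.1 i then
        ((semicube V i false).card - (semicube V i true).card) else 0 := by
  by_cases h : (cubeGraph V).Adj u v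
  · rw [gfun, if_pos h]
    have h1 : hammingDist u.1 v.1 = 1 := h
    rw [hammingDist, Finset.card_eq_one] at h1
    obtain ⟨i₀, hi₀set⟩ := h1
    have hi₀ : u.1 i₀ ≠ v.1 i₀ := by
      have : i₀ ∈ (Finset.univ.filter fun k => u.1 k ≠ v.1 k) := by
        rw [hi₀set]; exact Finset.mem_singleton_self i₀
      simpa using this
    rw [Finset.sum_eq_single i₀ (fun i _ hii₀ => ?_) (fun hi => absurd (Finset.mem_univ i₀) hi)]
    · rw [if_pos ⟨h, hi₀⟩]
      rw [closer_eq_s6 hdc h hi₀, closer_eq_s6 hdc h.symm (Ne.symm hi₀)]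
      have hle := w1_le_w0 hdc i₀
      have hne : v.1 i₀ = !u.1 i₀ := by
        cases hu : u.1 i₀ <;> cases hv : v.1 i₀ <;> simp_all
      cases hu : u.1 i₀ <;> rw [hu] at hne <;> rw [hne] <;> simp only [Bool.not_true,
        Bool.not_false] <;> omega
    · rw [if_neg]
      rintro ⟨-, hne⟩
      have : i ∈ (Finset.univ.filter fun k => u.1 k ≠ v.1 k) := by simpa using hne
      rw [hi₀set] at this
      exact hii₀ (Finset.mem_singleton.mp this)
  · rw [gfun, if_neg h]
    exact (Finset.sum_eq_zero fun i _ => if_neg fun hc => h hc.1).symm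

end GExpand
section AdjCount

variable {n : ℕ} {V : Finset (Vtx n)}

lemma inner_adj_count (hdc : DownClosed V) (i : Fin n) (u : VT V) :
    (∑ v : VT V, if (cubeGraph V).Adj u v ∧ u.1 i ≠ v.1 i then 1 else 0)
      = if Function.update u.1 i (!u.1 i) ∈ V then 1 else 0 := by
  rw [← Finset.card_filter]
  have hne : u.1 i ≠ !u.1 i := by cases h : u.1 i <;> simp
  by_cases hw : Function.update u.1 i (!u.1 i) ∈ V
  · rw [if_pos hw]
    have hset : (Finset.univ.filter fun v : VT V =>
        (cubeGraph V).Adj u v ∧ u.1 i ≠ v.1 i) = {⟨_, hw⟩} := by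
      ext v
      simp only [Finset.mem_filter, Finset.mem_univ, true_and, Finset.mem_singleton]
      constructor
      · rintro ⟨hadj, hne'⟩
        exact Subtype.ext (adj_diff_eq hadj hne')
      · rintro rfl
        refine ⟨ham_update_adj u.1 hne, ?_⟩
        show u.1 i ≠ Function.update u.1 i (!u.1 i) i
        rw [Function.update_self]
        exact hne
    rw [hset, Finset.card_singleton]
  · rw [if_neg hw, Finset.card_eq_zero]
    ext v
    simp only [Finset.mem_filter, Finset.mem_univ, true_and, Finset.notMem_empty,
      iff_false]
    rintro ⟨hadj, hne'⟩
    have := adj_diff_eq hadj hne'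
    exact hw (this ▸ v.2)

lemma adj_pair_count (hdc : DownClosed V) (i : Fin n) :
    (∑ u : VT V, ∑ v : VT V, if (cubeGraph V).Adj u v ∧ u.1 i ≠ v.1 i then 1 else 0)
      = 2 * (semicube V i true).card := by
  rw [Finset.sum_congr rfl fun u _ => inner_adj_count hdc i u]
  rw [← Finset.sum_filter_add_sum_filter_not Finset.univ (fun u : VT V => u.1 i = true)]
  have e1 : (∑ u ∈ Finset.univ.filter (fun u : VT V => u.1 i = true),
      if Function.update u.1 i (!u.1 i) ∈ V then 1 else 0)
      = (semicube V i true).card := by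
    rw [Finset.sum_congr rfl (fun u hu => by
      have ht : u.1 i = true := (Finset.mem_filter.mp hu).2
      rw [if_pos (by rw [ht, Bool.not_true]; exact update_false_mem hdc u.2 i)])]
    rw [Finset.sum_const, card_filter_coord i true, smul_eq_mul, mul_one]
  have e2 : (∑ u ∈ Finset.univ.filter (fun u : VT V => ¬(u.1 i = true)),
      if Function.update u.1 i (!u.1 i) ∈ V then 1 else 0)
      = (semicube V i true).card := by
    rw [← Finset.card_filter]
    apply Finset.card_bij (fun u _ => Function.update u.1 i true)
    · intro a ha
      simp only [Finset.mem_filter, Finset.mem_univ, true_and] at ha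
      have haf : a.1 i = false := by
        cases h : a.1 i
        · rfl
        · exact absurd h ha.1
      rw [haf, Bool.not_false] at ha
      simp only [semicube, Finset.mem_filter]
      exact ⟨ha.2, Function.update_self _ _ _⟩
    · intro a ha b hb h
      simp only [Finset.mem_filter, Finset.mem_univ, true_and] at ha hb
      have haf : a.1 i = false := by
        cases h' : a.1 i
        · rfl
        · exact absurd h' ha.1
      have hbf : b.1 i = false := by
        cases h' : b.1 i
        · rfl
        · exact absurd h' hb.1
      apply Subtype.ext
      funext j
      rcases eq_or_ne j i with rfl | hj
      · rw [haf, hbf]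
      · have := congrFun h j
        simpa [Function.update_of_ne hj] using this
    · intro c hc
      simp only [semicube, Finset.mem_filter] at hc
      have hcV : Function.update c i false ∈ V := update_false_mem hdc hc.1 i
      refine ⟨⟨Function.update c i false, hcV⟩, ?_, ?_⟩
      · simp only [Finset.mem_filter, Finset.mem_univ, true_and]
        constructor
        · rw [Function.update_self]
          simp
        · show Function.update (Function.update c i false) i
            (!(Function.update c i false) i) ∈ V
          rw [Function.update_self, Bool.not_false, Function.update_idem]
          rw [← hc.2, Function.update_eq_self]
          exact hc.1
      · show Function.update (Function.update c i false) i true = c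
        rw [Function.update_idem, ← hc.2, Function.update_eq_self]
  rw [e1, e2]
  ring

end AdjCount
section Final

variable {n : ℕ} {V : Finset (Vtx n)}

lemma mostar_formula (hdc : DownClosed V) :
    mostar (cubeGraph V) = ∑ i : Fin n,
      (semicube V i true).card
        * ((semicube V i false).card - (semicube V i true).card) := by
  have key := two_mul_sum_sym2_s6 (gfun V) (g_symm V) (g_diag V)
  rw [← mostar_eq_sym2] at key
  have hcast : (∑ a : VT V, ∑ b : VT V, gfun V a b)
      = ∑ i : Fin n, 2 * ((semicube V i true).card
        * ((semicube V i false).card - (semicube V i true).card)) := by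
    rw [Finset.sum_congr rfl fun a _ => Finset.sum_congr rfl fun b _ => g_expand hdc a b]
    have step1 : (∑ a : VT V, ∑ b : VT V, ∑ i : Fin n,
          if (cubeGraph V).Adj a b ∧ a.1 i ≠ b.1 i then
            ((semicube V i false).card - (semicube V i true).card) else 0)
        = ∑ a : VT V, ∑ i : Fin n, ∑ b : VT V,
          if (cubeGraph V).Adj a b ∧ a.1 i ≠ b.1 i then
            ((semicube V i false).card - (semicube V i true).card) else 0 :=
      Finset.sum_congr rfl fun a _ => Finset.sum_comm
    rw [step1, Finset.sum_comm]
    refine Finset.sum_congr rfl fun i _ => ?_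
    have hsplit : ∀ a b : VT V,
        (if (cubeGraph V).Adj a b ∧ a.1 i ≠ b.1 i then
          ((semicube V i false).card - (semicube V i true).card) else 0)
        = ((semicube V i false).card - (semicube V i true).card)
          * (if (cubeGraph V).Adj a b ∧ a.1 i ≠ b.1 i then 1 else 0) := by
      intro a b
      split <;> simp
    rw [Finset.sum_congr rfl fun a _ => Finset.sum_congr rfl fun b _ => hsplit a b]
    rw [Finset.sum_congr rfl fun a (_ : a ∈ Finset.univ) => (Finset.mul_sum _ _ _).symm,
      ← Finset.mul_sum, adj_pair_count hdc i]
    ring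
  rw [hcast, ← Finset.mul_sum] at key
  exact Nat.eq_of_mul_eq_mul_left (by norm_num) key

end Final


/-- For a daisy cube `G`,
`W(G) - Mo(G) = ∑_{i=1}^n |W_{(i,1)}(G)|²`. -/
theorem daisy_wiener_sub_mostar {n : ℕ} (V : Finset (Vtx n))
    (hne : V.Nonempty) (hdc : DownClosed V) :
    (wiener (cubeGraph V) : ℤ) - (mostar (cubeGraph V) : ℤ) =
      ∑ i : Fin n, ((semicube V i true).card : ℤ) ^ 2 := by
  rw [wiener_eq hdc hne, mostar_formula hdc]
  push_cast
  rw [← Finset.sum_sub_distrib]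
  refine Finset.sum_congr rfl fun i _ => ?_
  have hle := w1_le_w0 hdc i
  rw [Nat.cast_sub hle]
  ring
end Walks
end

section
/- Let G be a daisy cube of dimension n, i.e., the subgraph of the hypercube Q_n induced by a nonempty downward-closed vertex set V ⊆ {0,1}^n. Then G is connected and is an isometric subgraph of Q_n: for all vertices u, v of G, the graph distance between u and v in G equals their Hamming distance (the number of coordinates in which they differ). -/
lemma ham_update {n : ℕ} (u v : Fin n → Bool) (i : Fin n) (h : u i ≠ v i) :
    hammingDist (Function.update u i (v i)) v + 1 = hammingDist u v := by
  unfold hammingDist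
  have hset : ({j | Function.update u i (v i) j ≠ v j} : Finset (Fin n))
      = ({j | u j ≠ v j} : Finset (Fin n)).erase i := by
    ext j
    by_cases hj : j = i <;> simp [Function.update, hj, h]
  rw [hset, Finset.card_erase_of_mem (by simpa using h)]
  have : 0 < ({j | u j ≠ v j} : Finset (Fin n)).card :=
    Finset.card_pos.2 ⟨i, by simpa using h⟩
  omega

lemma ham_update_one {n : ℕ} (u v : Fin n → Bool) (i : Fin n) (h : u i ≠ v i) :
    hammingDist u (Function.update u i (v i)) = 1 := by
  unfold hammingDist
  have hset : ({j | u j ≠ Function.update u i (v i) j} : Finset (Fin n)) = {i} := by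
    ext j
    by_cases hj : j = i <;> simp [Function.update, hj, h]
  rw [hset, Finset.card_singleton]

lemma daisy_walk {n : ℕ} (V : Finset (Vtx n)) (hdc : DownClosed V) :
    ∀ d (u v : Vtx n) (hu : u ∈ V) (hv : v ∈ V), hammingDist u v = d →
      ∃ w : (cubeGraph V).Walk ⟨u, hu⟩ ⟨v, hv⟩, w.length = d := by
  intro d
  induction d with
  | zero =>
    intro u v hu hv hd
    have : u = v := hammingDist_eq_zero.1 hd
    subst this
    exact ⟨SimpleGraph.Walk.nil, rfl⟩
  | succ d ih =>
    intro u v hu hv hd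
    have hpos : 0 < hammingDist u v := by omega
    obtain ⟨i, hi⟩ : ∃ i, u i ≠ v i := by
      by_contra hc
      push_neg at hc
      have : u = v := funext hc
      simp [this, hammingDist_self] at hpos
    by_cases hui : u i = true
    · -- flip u's coordinate down
      have hvi : v i = false := by cases h' : v i <;> simp_all
      set u' := Function.update u i (v i) with hu'
      have hle : ∀ j, u' j ≤ u j := by
        intro j
        by_cases hj : j = i <;> simp [hu', Function.update, hj, hvi, hui]
      have hu'V : u' ∈ V := hdc u' u hle hu
      have hd' : hammingDist u' v = d := by
        have := ham_update u v i hi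
        rw [← hu'] at this
        omega
      obtain ⟨w, hw⟩ := ih u' v hu'V hv hd'
      have hadj : (cubeGraph V).Adj ⟨u, hu⟩ ⟨u', hu'V⟩ := by
        show hammingDist u u' = 1
        rw [hu']
        exact ham_update_one u v i hi
      refine ⟨SimpleGraph.Walk.cons hadj w, by simp [hw]⟩
    · -- flip v's coordinate down
      have hvi : v i = true := by cases h' : v i <;> simp_all
      set v' := Function.update v i (u i) with hv'
      have hle : ∀ j, v' j ≤ v j := by
        intro j
        by_cases hj : j = i <;> simp [hv', Function.update, hj, hvi]
      have hv'V : v' ∈ V := hdc v' v hle hv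
      have hd' : hammingDist u v' = d := by
        have := ham_update v u i (Ne.symm hi)
        rw [hammingDist_comm (Function.update v i (u i)) u, hammingDist_comm v u, ← hv'] at this
        omega
      obtain ⟨w, hw⟩ := ih u v' hu hv'V hd'
      have hadj : (cubeGraph V).Adj ⟨v', hv'V⟩ ⟨v, hv⟩ := by
        show hammingDist v' v = 1
        rw [hv', hammingDist_comm]
        exact ham_update_one v u i (Ne.symm hi)
      refine ⟨w.concat hadj, by simp [hw]⟩

lemma ham_le_walk {n : ℕ} (V : Finset (Vtx n)) :
    ∀ {a b : {x : Vtx n // x ∈ V}} (w : (cubeGraph V).Walk a b),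
      hammingDist a.1 b.1 ≤ w.length := by
  intro a b w
  induction w with
  | nil => simp
  | cons h w ih =>
    calc hammingDist _ _ ≤ hammingDist _ _ + hammingDist _ _ := hammingDist_triangle _ _ _
    _ ≤ 1 + w.length := by rw [h]; omega
    _ = _ := by simp [Nat.add_comm]


/-- A daisy cube is connected and is an isometric subgraph of `Q_n`:
the graph distance between any two of its vertices equals their Hamming distance. -/
theorem daisy_connected_isometric {n : ℕ} (V : Finset (Vtx n))
    (hne : V.Nonempty) (hdc : DownClosed V) :
    (cubeGraph V).Connected ∧
      ∀ u v : {x : Vtx n // x ∈ V}, (cubeGraph V).dist u v = hammingDist u.1 v.1 := by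
  have hreach : ∀ u v : {x : Vtx n // x ∈ V}, (cubeGraph V).Reachable u v := by
    rintro ⟨u, hu⟩ ⟨v, hv⟩
    obtain ⟨w, -⟩ := daisy_walk V hdc (hammingDist u v) u v hu hv rfl
    exact ⟨w⟩
  have hconn : (cubeGraph V).Connected := by
    obtain ⟨x, hx⟩ := hne
    haveI : Nonempty {u : Vtx n // u ∈ V} := ⟨⟨x, hx⟩⟩
    exact ⟨hreach⟩
  refine ⟨hconn, fun u v => ?_⟩
  apply le_antisymm
  · obtain ⟨w, hw⟩ := daisy_walk V hdc (hammingDist u.1 v.1) u.1 v.1 u.2 v.2 rfl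
    calc (cubeGraph V).dist u v ≤ w.length := SimpleGraph.dist_le w
    _ = _ := hw
  · obtain ⟨w, hw⟩ := (hreach u v).exists_walk_length_eq_dist
    calc hammingDist u.1 v.1 ≤ w.length := ham_le_walk V w
    _ = _ := hw
end
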